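/- Let f : ℝⁿ → ℝ be twice continuously differentiable with L_H-Lipschitz Hessian, L_H > 0. Fix x ∈ ℝⁿ, set g := ∇f(x) and H := ∇²f(x), and suppose g ≠ 0. Let σ > 0, ς₃ ∈ [0,1], κ_θ > 0, κ_C > 0, κ_a ≥ 1, set μ := [−λ_min(H)]₊, and suppose μ ≤ κ_C·√(σ‖g‖). Let s ∈ ℝⁿ satisfy ‖(H + (√(σ‖g‖) + μ)·I)s + g‖ ≤ ς₃·√(σ‖g‖)·‖s‖. Then ‖s‖ ≥ (−(2+κ_C)·√(κ_a σ‖g‖) + √((2+κ_C)²·κ_a σ‖g‖ + 2 L_H ‖∇f(x+s)‖))/L_H. -/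

import Mathlib

open RealInnerProductSpace

/-- The smallest eigenvalue of a symmetric operator on ℝⁿ, as the infimum of the
Rayleigh quotient over the unit sphere. -/
noncomputable def lamMin {n : ℕ} (T : EuclideanSpace ℝ (Fin n) → EuclideanSpace ℝ (Fin n)) : ℝ :=
  sInf {r : ℝ | ∃ v : EuclideanSpace ℝ (Fin n), ‖v‖ = 1 ∧ ⟪v, T v⟫ = r}

lemma aux_taylor_grad {E : Type*} [NormedAddCommGroup E] [InnerProductSpace ℝ E]
    [CompleteSpace E]
    (f : E → ℝ) (Hess : E → E →L[ℝ] E) (LH : ℝ)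
    (hHess : ∀ y, HasFDerivAt (gradient f) (Hess y) y)
    (hLip : ∀ y z, ‖Hess y - Hess z‖ ≤ LH * ‖y - z‖)
    (x s : E) :
    ‖gradient f (x + s) - gradient f x - Hess x s‖ ≤ LH / 2 * ‖s‖ ^ 2 := by
  set φ : ℝ → E := fun t => gradient f (x + t • s) - gradient f x - t • Hess x s with hφdef
  have hφ : ∀ t : ℝ, HasDerivAt φ ((Hess (x + t • s)) s - Hess x s) t := by
    intro t
    have h1 : HasDerivAt (fun t : ℝ => x + t • s) s t := by
      simpa using ((hasDerivAt_id t).smul_const s).const_add x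
    have h2 := (hHess (x + t • s)).comp_hasDerivAt t h1
    have h3 : HasDerivAt (fun t : ℝ => t • Hess x s) (Hess x s) t := by
      simpa using (hasDerivAt_id t).smul_const (Hess x s)
    exact (h2.sub_const (gradient f x)).sub h3
  have hB : ∀ t : ℝ, HasDerivAt (fun t => LH / 2 * ‖s‖ ^ 2 * t ^ 2) (LH * ‖s‖ ^ 2 * t) t := by
    intro t
    have := (hasDerivAt_pow 2 t).const_mul (LH / 2 * ‖s‖ ^ 2)
    refine this.congr_deriv ?_
    norm_num
    ring
  have key := image_norm_le_of_norm_deriv_right_le_deriv_boundary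
    (f := φ) (f' := fun t => (Hess (x + t • s)) s - Hess x s) (a := 0) (b := 1)
    (fun t _ => (hφ t).continuousAt.continuousWithinAt)
    (fun t _ => (hφ t).hasDerivWithinAt)
    (by simp [hφdef]) hB ?_
  · have h1 := key (Set.right_mem_Icc.2 zero_le_one)
    simpa [hφdef] using h1
  · intro t ht
    have h1 : ‖(Hess (x + t • s)) s - Hess x s‖ ≤ ‖Hess (x + t • s) - Hess x‖ * ‖s‖ := by
      have := (Hess (x + t • s) - Hess x).le_opNorm s
      simpa using this
    have h2 : ‖Hess (x + t • s) - Hess x‖ ≤ LH * ‖t • s‖ := by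
      simpa using hLip (x + t • s) x
    have ht0 : 0 ≤ t := ht.1
    have h3 : ‖t • s‖ = t * ‖s‖ := by
      rw [norm_smul, Real.norm_eq_abs, abs_of_nonneg ht0]
    have hs0 : (0:ℝ) ≤ ‖s‖ := norm_nonneg s
    calc ‖(Hess (x + t • s)) s - Hess x s‖ ≤ ‖Hess (x + t • s) - Hess x‖ * ‖s‖ := h1
      _ ≤ (LH * (t * ‖s‖)) * ‖s‖ := by
          apply mul_le_mul_of_nonneg_right _ hs0
          rw [← h3]; exact h2
      _ = LH * ‖s‖ ^ 2 * t := by ring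

set_option maxHeartbeats 1000000 in
/-- Lemma 3.3 of the paper: lower bound on the length of a regularized Newton
step in terms of the gradient at the next point. -/
theorem step_length_lower_bound {n : ℕ}
    (f : EuclideanSpace ℝ (Fin n) → ℝ)
    (Hess : EuclideanSpace ℝ (Fin n) → EuclideanSpace ℝ (Fin n) →L[ℝ] EuclideanSpace ℝ (Fin n))
    (LH : ℝ) (hLH : 0 < LH)
    (hf : ContDiff ℝ 2 f)
    (hHess : ∀ y, HasFDerivAt (gradient f) (Hess y) y)
    (hLip : ∀ y z, ‖Hess y - Hess z‖ ≤ LH * ‖y - z‖)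
    (x s : EuclideanSpace ℝ (Fin n))
    (hg : gradient f x ≠ 0)
    (σ ς₃ κθ κC κa : ℝ) (hσ : 0 < σ) (hς₃0 : 0 ≤ ς₃) (hς₃1 : ς₃ ≤ 1) (hκθ : 0 < κθ)
    (hκC : 0 < κC) (hκa : 1 ≤ κa)
    (μ : ℝ) (hμ : μ = max (-(lamMin fun v => Hess x v)) 0)
    (hμκ : μ ≤ κC * Real.sqrt (σ * ‖gradient f x‖))
    (hres : ‖Hess x s + (Real.sqrt (σ * ‖gradient f x‖) + μ) • s + gradient f x‖
      ≤ ς₃ * Real.sqrt (σ * ‖gradient f x‖) * ‖s‖) :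
    ‖s‖ ≥ (-(2 + κC) * Real.sqrt (κa * σ * ‖gradient f x‖)
        + Real.sqrt ((2 + κC) ^ 2 * (κa * σ * ‖gradient f x‖)
            + 2 * LH * ‖gradient f (x + s)‖)) / LH := by
  set g := gradient f x with hgdef
  set t := ‖s‖ with htdef
  have ht0 : 0 ≤ t := norm_nonneg s
  have hgn : 0 < ‖g‖ := norm_pos_iff.2 hg
  have hσg : 0 ≤ σ * ‖g‖ := le_of_lt (mul_pos hσ hgn)
  set r := Real.sqrt (σ * ‖g‖) with hrdef
  have hr0 : 0 ≤ r := Real.sqrt_nonneg _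
  have hμ0 : 0 ≤ μ := hμ ▸ le_max_right _ _
  set ra := Real.sqrt (κa * σ * ‖g‖) with hradef
  have hra0 : 0 ≤ ra := Real.sqrt_nonneg _
  have hrra : r ≤ ra := by
    apply Real.sqrt_le_sqrt
    nlinarith
  set a := (2 + κC) * ra with hadef
  have ha0 : 0 ≤ a := mul_nonneg (by linarith) hra0
  -- Taylor bound
  have htaylor := aux_taylor_grad f Hess LH hHess hLip x s
  -- bound on ‖gradient f (x+s)‖
  have hkey : ‖gradient f (x + s)‖ ≤ LH / 2 * t ^ 2 + a * t := by
    have hdecomp : gradient f (x + s)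
        = (gradient f (x + s) - g - Hess x s)
          + (Hess x s + (r + μ) • s + g) - (r + μ) • s := by
      abel
    have h1 : ‖gradient f (x + s)‖
        ≤ ‖gradient f (x + s) - g - Hess x s‖ + ‖Hess x s + (r + μ) • s + g‖
          + ‖(r + μ) • s‖ := by
      have ha := norm_sub_le ((gradient f (x + s) - g - Hess x s)
        + (Hess x s + (r + μ) • s + g)) ((r + μ) • s)
      have hb := norm_add_le (gradient f (x + s) - g - Hess x s)
        (Hess x s + (r + μ) • s + g)
      conv_lhs => rw [hdecomp]
      linarith
    have h2 : ‖(r + μ) • s‖ = (r + μ) * t := by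
      rw [norm_smul, Real.norm_eq_abs, abs_of_nonneg (by linarith)]
    have hμr : μ ≤ κC * r := hμκ
    have hres' : ‖Hess x s + (r + μ) • s + g‖ ≤ ς₃ * r * t := hres
    have hς : ς₃ * r * t ≤ r * t := by
      have : ς₃ * r * t ≤ 1 * r * t := by
        apply mul_le_mul_of_nonneg_right _ ht0
        exact mul_le_mul_of_nonneg_right hς₃1 hr0
      linarith
    calc ‖gradient f (x + s)‖
        ≤ LH / 2 * t ^ 2 + ς₃ * r * t + (r + μ) * t := by
          rw [← h2]; linarith
      _ ≤ LH / 2 * t ^ 2 + (2 + κC) * r * t := by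
          have : μ * t ≤ κC * r * t := mul_le_mul_of_nonneg_right hμr ht0
          nlinarith
      _ ≤ LH / 2 * t ^ 2 + a * t := by
          have : (2 + κC) * r * t ≤ (2 + κC) * ra * t := by
            apply mul_le_mul_of_nonneg_right _ ht0
            apply mul_le_mul_of_nonneg_left hrra (by linarith)
          rw [hadef]; linarith
  -- the quadratic inequality
  have hsq : ra ^ 2 = κa * σ * ‖g‖ := Real.sq_sqrt (by nlinarith)
  have hle : (2 + κC) ^ 2 * (κa * σ * ‖g‖) + 2 * LH * ‖gradient f (x + s)‖
      ≤ (LH * t + a) ^ 2 := by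
    have h1 : 2 * LH * ‖gradient f (x + s)‖ ≤ 2 * LH * (LH / 2 * t ^ 2 + a * t) := by
      apply mul_le_mul_of_nonneg_left hkey (by linarith)
    have h2 : (2 + κC) ^ 2 * (κa * σ * ‖g‖) = a ^ 2 := by
      rw [hadef]; rw [← hsq]; ring
    have h3 : (LH * t + a) ^ 2 = a ^ 2 + 2 * LH * (LH / 2 * t ^ 2 + a * t) := by ring
    rw [h2, h3]; linarith
  have hsqrt : Real.sqrt ((2 + κC) ^ 2 * (κa * σ * ‖g‖) + 2 * LH * ‖gradient f (x + s)‖)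
      ≤ LH * t + a := by
    have := Real.sqrt_le_sqrt hle
    rwa [Real.sqrt_sq (by nlinarith [mul_nonneg hLH.le ht0])] at this
  rw [ge_iff_le, div_le_iff₀ hLH]
  have : -(2 + κC) * ra = -a := by rw [hadef]; ring
  rw [this]
  linarith [hsqrt]
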